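/- arXiv:1306.3260 — 2 statements merged into one kernel-verified Lean document; each statement's English description precedes it below -/
import Mathlib

section
/- Let F₂ denote the free group on two generators. There exist a finite alphabet X and a language L ⊆ X* with L ∈ VA(F₂ × F₂) such that the Parikh image Ψ(L) is not semilinear. -/
namespace Paper

/-- `VA M L`: the language `L ⊆ X*` is accepted by a valence automaton over the monoid `M`,
via the standard characterization: there are a finite alphabet `Y`, a regular language
`R ⊆ Y*`, and monoid homomorphisms `φ : Y* → M`, `h : Y* → X*` with `L = h(R ∩ φ⁻¹(1))`. -/
def VA (M : Type*) [Monoid M] {X : Type} (L : Language X) : Prop :=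
  ∃ (Y : Type) (_ : Fintype Y) (R : Language Y)
    (φ : FreeMonoid Y →* M) (h : FreeMonoid Y →* FreeMonoid X),
    R.IsRegular ∧
      L = (fun w => FreeMonoid.toList (h w)) ''
            {w : FreeMonoid Y | FreeMonoid.toList w ∈ R ∧ φ w = 1}

open Classical in
/-- The Parikh image of a word: the multiset counting occurrences of each letter. -/
noncomputable def parikh {X : Type} (w : List X) : X → ℕ := fun x => w.count x

/-- A linear subset of `X^⊕`. -/
def IsLinearSet {X : Type} (S : Set (X → ℕ)) : Prop :=
  ∃ (α₀ : X → ℕ) (n : ℕ) (α : Fin n → X → ℕ),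
    S = {β | ∃ m : Fin n → ℕ, β = α₀ + ∑ i, m i • α i}

/-- A semilinear subset of `X^⊕`: a finite union of linear sets. -/
def IsSemilinearSet {X : Type} (S : Set (X → ℕ)) : Prop :=
  ∃ (n : ℕ) (T : Fin n → Set (X → ℕ)), (∀ i, IsLinearSet (T i)) ∧ S = ⋃ i, T i

/-- A language is semilinear if its Parikh image is a semilinear set. -/
def LangSemilinear {X : Type} (L : Language X) : Prop := IsSemilinearSet (parikh '' L)



-- letters
inductive A13 : Type | s | a | b | c | p | q | e | f
  deriving DecidableEq

instance : Fintype A13 :=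
  ⟨{.s, .a, .b, .c, .p, .q, .e, .f}, fun x => by cases x <;> simp⟩

-- DFA states
inductive St13 : Type | S0 | S1 | S2 | S3 | S4 | S5 | S6 | S7 | S8 | SD
  deriving DecidableEq

instance : Fintype St13 :=
  ⟨{.S0, .S1, .S2, .S3, .S4, .S5, .S6, .S7, .S8, .SD}, fun x => by cases x <;> simp⟩

open A13 St13

def delta : St13 → A13 → St13
  | S0, .p => S1
  | S1, .s => S2
  | S2, .q => S3
  | S3, .b => S4
  | S3, .p => S5
  | S3, .c => S6
  | S3, .e => S7
  | S3, .f => S8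
  | S4, .b => S4
  | S4, .p => S5
  | S5, .a => S5
  | S5, .q => S3
  | S6, .c => S6
  | S6, .e => S7
  | S6, .f => S8
  | S7, .e => S7
  | S7, .f => S8
  | S8, .f => S8
  | _, _ => SD

def dfa : DFA A13 St13 := ⟨delta, S0, {S3, S6, S7, S8}⟩

def rep (x : A13) (n : ℕ) : List A13 := List.replicate n x

def chunk (β α : ℕ) : List A13 := rep .b β ++ [.p] ++ rep .a α ++ [.q]

def base (l : List (ℕ × ℕ)) : List A13 :=
  [.p, .s, .q] ++ (l.map fun z => chunk z.1 z.2).flatten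

def mkWord (l : List (ℕ × ℕ)) (k r r' : ℕ) : List A13 :=
  base l ++ rep .c k ++ rep .e r ++ rep .f r'


/-- The wreath-product-like group `ℤ ≀ ℤ` (full support version). -/
@[ext] structure Wg where
  f : ℤ → ℤ
  t : ℤ

instance : Group Wg where
  mul x y := ⟨fun n => x.f n + y.f (n - x.t), x.t + y.t⟩
  one := ⟨fun _ => 0, 0⟩
  inv x := ⟨fun n => - x.f (n + x.t), - x.t⟩
  mul_assoc a b c := by
    ext n
    · show (a.f n + b.f (n - a.t)) + c.f (n - (a.t + b.t)) =
        a.f n + (b.f (n - a.t) + c.f ((n - a.t) - b.t))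
      rw [sub_sub, add_assoc]
    · exact add_assoc _ _ _
  one_mul x := by
    ext n
    · show 0 + x.f (n - 0) = x.f n
      simp
    · exact zero_add _
  mul_one x := by
    ext n
    · show x.f n + 0 = x.f n
      simp
    · exact add_zero _
  inv_mul_cancel x := by
    ext n
    · show - x.f (n + x.t) + x.f (n - (-x.t)) = 0
      simp [sub_neg_eq_add]
    · exact neg_add_cancel _

@[simp] lemma Wg.mul_f (x y : Wg) (n : ℤ) : (x * y).f n = x.f n + y.f (n - x.t) := rfl
@[simp] lemma Wg.mul_t (x y : Wg) : (x * y).t = x.t + y.t := rfl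
@[simp] lemma Wg.one_f (n : ℤ) : (1 : Wg).f n = 0 := rfl
@[simp] lemma Wg.one_t : (1 : Wg).t = 0 := rfl
@[simp] lemma Wg.inv_f (x : Wg) (n : ℤ) : (x⁻¹).f n = - x.f (n + x.t) := rfl
@[simp] lemma Wg.inv_t (x : Wg) : (x⁻¹).t = - x.t := rfl

def AA : Wg := ⟨fun _ => 0, 1⟩
def XX : Wg := ⟨fun n => if n = 0 then 1 else 0, 0⟩

lemma AA_pow (n : ℕ) : AA ^ n = ⟨fun _ => 0, n⟩ := by
  induction n with
  | zero => ext m <;> simp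
  | succ n ih => rw [pow_succ, ih]; ext m <;> simp [AA]

lemma XX_pow (n : ℕ) : XX ^ n = ⟨fun m => if m = 0 then (n : ℤ) else 0, 0⟩ := by
  induction n with
  | zero => ext m <;> simp
  | succ n ih =>
    rw [pow_succ, ih]; ext m <;> simp [XX]
    split <;> simp

lemma XX_zpow (c : ℤ) : XX ^ c = ⟨fun m => if m = 0 then c else 0, 0⟩ := by
  cases c with
  | ofNat n => rw [Int.ofNat_eq_natCast, zpow_natCast, XX_pow]
  | negSucc n =>
    rw [zpow_negSucc, XX_pow]
    ext m <;> simp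
    split <;> [skip; rfl]
    rw [Int.negSucc_eq]

section Gadget

variable {G : Type*} [Group G]

def gadget (ag xg : G) (cs : List ℤ) (r : ℕ) : G :=
  (cs.map fun c => ag * xg ^ c).prod * (ag ^ r)⁻¹

lemma gadget_eq_one (ag xg : G) {cs : List ℤ} (h : ∀ c ∈ cs, c = 0) :
    gadget ag xg cs cs.length = 1 := by
  unfold gadget
  have h1 : (cs.map fun c => ag * xg ^ c) = List.replicate cs.length ag := by
    rw [show cs.length = (cs.map fun c => ag * xg ^ c).length by simp]
    apply List.eq_replicate_of_mem
    intro b hb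
    rcases List.mem_map.1 hb with ⟨c, hc, rfl⟩
    rw [h c hc]
    simp
  rw [h1, List.prod_replicate, mul_inv_cancel]

end Gadget

def Pp (cs : List ℤ) : Wg := (cs.map fun c => AA * XX ^ c).prod

@[simp] lemma AA_f (n : ℤ) : AA.f n = 0 := rfl
@[simp] lemma AA_t : AA.t = 1 := rfl

lemma Pp_cons (c : ℤ) (cs : List ℤ) : Pp (c :: cs) = (AA * XX ^ c) * Pp cs := by
  unfold Pp; simp

lemma Pp_cons_f (c : ℤ) (cs : List ℤ) (n : ℤ) :
    (Pp (c :: cs)).f n = (if n - 1 = 0 then c else 0) + (Pp cs).f (n - 1) := by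
  rw [Pp_cons]
  simp [XX_zpow]
  congr

lemma Pp_t (cs : List ℤ) : (Pp cs).t = cs.length := by
  induction cs with
  | nil => simp [Pp]
  | cons c cs ih => rw [Pp_cons]; simp [XX_zpow, ih]; ring

lemma Pp_f_nonpos (cs : List ℤ) : ∀ n ≤ 0, (Pp cs).f n = 0 := by
  induction cs with
  | nil => intro n _; simp [Pp]
  | cons c cs ih =>
    intro n hn
    rw [Pp_cons_f, if_neg (by omega), ih (n - 1) (by omega)]
    simp

lemma Pp_f_allzero {cs : List ℤ} (h : ∀ n, (Pp cs).f n = 0) : ∀ c ∈ cs, c = 0 := by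
  induction cs with
  | nil => simp
  | cons c cs ih =>
    have hc : c = 0 := by
      have := h 1
      rw [Pp_cons_f] at this
      simpa [Pp_f_nonpos cs 0 le_rfl] using this
    have htail : ∀ n, (Pp cs).f n = 0 := by
      intro n
      have := h (n + 1)
      rw [Pp_cons_f, hc] at this
      simpa using this
    intro d hd
    rcases List.mem_cons.1 hd with rfl | hd
    · exact hc
    · exact ih htail d hd

lemma gadget_Wg_eq_one {cs : List ℤ} {r : ℕ} (h : gadget AA XX cs r = 1) :
    (∀ c ∈ cs, c = 0) ∧ r = cs.length := by
  have hg : gadget AA XX cs r = Pp cs * (AA ^ r)⁻¹ := rfl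
  rw [hg, AA_pow] at h
  have ht := congrArg Wg.t h
  have hf := congrArg Wg.f h
  constructor
  · apply Pp_f_allzero
    intro n
    have := congrFun hf n
    simpa using this
  · have h2 := Pp_t cs
    have : (Pp cs).t + -(r:ℤ) = 0 := by simpa using ht
    omega

section Eval

open A13

variable {G : Type*} [Group G]

def g1 (ag xg : G) : A13 → G
  | .s => xg ^ (2:ℕ)
  | .a => xg ^ (2:ℕ)
  | .b => xg⁻¹
  | .c => xg⁻¹
  | .p => ag
  | .q => 1
  | .e => ag⁻¹
  | .f => 1

def g2 (ag xg : G) : A13 → G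
  | .s => 1
  | .a => xg⁻¹
  | .b => xg ^ (2:ℕ)
  | .c => 1
  | .p => 1
  | .q => ag
  | .e => 1
  | .f => ag⁻¹

def wp (g : A13 → G) (w : List A13) : G := (w.map g).prod

@[simp] lemma wp_nil (g : A13 → G) : wp g [] = 1 := rfl

@[simp] lemma wp_append (g : A13 → G) (u v : List A13) :
    wp g (u ++ v) = wp g u * wp g v := by simp [wp]

@[simp] lemma wp_cons (g : A13 → G) (x : A13) (u : List A13) :
    wp g (x :: u) = g x * wp g u := by simp [wp]

lemma wp_rep (g : A13 → G) (x : A13) (n : ℕ) : wp g (rep x n) = g x ^ n := by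
  simp [wp, rep]

def checks1 (prev : ℤ) : List (ℕ × ℕ) → ℕ → List ℤ
  | [], k => [prev - k]
  | (z :: t), k => (prev - z.1) :: checks1 (2 * z.2) t k

def checks2 (l : List (ℕ × ℕ)) : List ℤ := (l.map fun z => 2 * (z.1:ℤ) - z.2) ++ [0]

lemma inv_pow_eq_zpow (xg : G) (k : ℕ) : (xg⁻¹) ^ k = xg ^ (-(k:ℤ)) := by
  rw [inv_pow, ← zpow_natCast, ← zpow_neg]

lemma aux1 (ag xg : G) : ∀ (l : List (ℕ × ℕ)) (prev : ℤ) (k : ℕ),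
    ag * (xg ^ prev * wp (g1 ag xg) ((l.map fun z => chunk z.1 z.2).flatten ++ rep .c k))
      = ((checks1 prev l k).map fun c => ag * xg ^ c).prod := by
  intro l
  induction l with
  | nil =>
    intro prev k
    simp only [List.map_nil, List.flatten_nil, List.nil_append, checks1, List.map_cons,
      List.prod_cons, List.prod_nil, mul_one]
    rw [wp_rep, g1, inv_pow_eq_zpow, ← zpow_add, ← sub_eq_add_neg]
  | cons z t ih =>
    intro prev k
    simp only [List.map_cons, List.flatten_cons, List.append_assoc, wp_append, checks1,
      List.prod_cons]
    rw [← ih (2 * z.2) k]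
    have hchunk : wp (g1 ag xg) (chunk z.1 z.2) = xg ^ (-(z.1:ℤ)) * ag * xg ^ (2 * (z.2:ℤ)) := by
      simp only [chunk, wp_append, wp_rep, wp_cons, wp_nil]
      rw [show g1 ag xg .b = xg⁻¹ from rfl, show g1 ag xg .a = xg ^ (2:ℕ) from rfl,
        show g1 ag xg .p = ag from rfl, show g1 ag xg .q = (1:G) from rfl]
      rw [inv_pow_eq_zpow, ← pow_mul, ← zpow_natCast xg (2 * z.2)]
      push_cast
      group
    rw [hchunk, ← wp_append (g1 ag xg) ((t.map fun z => chunk z.1 z.2).flatten) (rep .c k)]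
    have : xg ^ prev * xg ^ (-(z.1:ℤ)) = xg ^ (prev - z.1) := by
      rw [← zpow_add, ← sub_eq_add_neg]
    calc ag * (xg ^ prev * (xg ^ (-(z.1:ℤ)) * ag * xg ^ (2 * (z.2:ℤ)) *
            wp (g1 ag xg) ((t.map fun z => chunk z.1 z.2).flatten ++ rep .c k)))
        = (ag * xg ^ (prev - (z.1:ℤ))) * (ag * (xg ^ (2 * (z.2:ℤ)) *
            wp (g1 ag xg) ((t.map fun z => chunk z.1 z.2).flatten ++ rep .c k))) := by
          rw [← this]; group
      _ = _ := by rw [mul_assoc]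

lemma aux2 (ag xg : G) : ∀ (l : List (ℕ × ℕ)),
    ag * wp (g2 ag xg) ((l.map fun z => chunk z.1 z.2).flatten)
      = ((checks2 l).map fun c => ag * xg ^ c).prod := by
  intro l
  induction l with
  | nil => simp [checks2]
  | cons z t ih =>
    simp only [List.map_cons, List.flatten_cons, wp_append, checks2, List.cons_append,
      List.prod_cons, List.map_cons]
    rw [show (t.map fun z => 2 * (z.1:ℤ) - z.2) ++ [0] = checks2 t from rfl, ← ih]
    have hchunk : wp (g2 ag xg) (chunk z.1 z.2) = xg ^ (2 * (z.1:ℤ) - z.2) * ag := by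
      simp only [chunk, wp_append, wp_rep, wp_cons, wp_nil]
      rw [show g2 ag xg .b = xg ^ (2:ℕ) from rfl, show g2 ag xg .a = xg⁻¹ from rfl,
        show g2 ag xg .p = (1:G) from rfl, show g2 ag xg .q = ag from rfl]
      rw [inv_pow_eq_zpow, ← pow_mul, ← zpow_natCast xg (2 * z.1)]
      push_cast
      group
    rw [hchunk]
    simp [mul_assoc]

end Eval

section Eval2

variable {G : Type*} [Group G]

lemma eval_g1 (ag xg : G) (l : List (ℕ × ℕ)) (k r r' : ℕ) :
    wp (g1 ag xg) (mkWord l k r r') = gadget ag xg (checks1 2 l k) r := by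
  have h := aux1 ag xg l 2 k
  rw [wp_append] at h
  unfold mkWord base gadget
  simp only [List.append_assoc, wp_append, wp_rep, wp_cons, wp_nil]
  rw [show g1 ag xg .p = ag from rfl, show g1 ag xg .s = xg ^ (2:ℕ) from rfl,
    show g1 ag xg .q = (1:G) from rfl, show g1 ag xg .e = ag⁻¹ from rfl,
    show g1 ag xg .f = (1:G) from rfl]
  rw [wp_rep] at h
  rw [← h, show xg ^ (2:ℕ) = xg ^ ((2:ℕ):ℤ) from (zpow_natCast xg 2).symm]
  rw [inv_pow]
  push_cast
  group

lemma eval_g2 (ag xg : G) (l : List (ℕ × ℕ)) (k r r' : ℕ) :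
    wp (g2 ag xg) (mkWord l k r r') = gadget ag xg (checks2 l) r' := by
  have h := aux2 ag xg l
  unfold mkWord base gadget
  simp only [List.append_assoc, wp_append, wp_rep, wp_cons, wp_nil]
  rw [show g2 ag xg .p = (1:G) from rfl, show g2 ag xg .s = (1:G) from rfl,
    show g2 ag xg .q = ag from rfl, show g2 ag xg .e = (1:G) from rfl,
    show g2 ag xg .f = ag⁻¹ from rfl, show g2 ag xg .c = (1:G) from rfl]
  rw [← h, inv_pow]
  group

end Eval2

section Arith

lemma checks1_len : ∀ (l : List (ℕ × ℕ)) (prev : ℤ) (k : ℕ),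
    (checks1 prev l k).length = l.length + 1 := by
  intro l
  induction l with
  | nil => intro prev k; rfl
  | cons z t ih => intro prev k; simp [checks1, ih]

lemma checks2_len (l : List (ℕ × ℕ)) : (checks2 l).length = l.length + 1 := by
  simp [checks2]

lemma checks2_cons (z : ℕ × ℕ) (t : List (ℕ × ℕ)) :
    checks2 (z :: t) = (2 * (z.1:ℤ) - z.2) :: checks2 t := rfl

lemma arith : ∀ (l : List (ℕ × ℕ)) (prev k : ℕ),
    (∀ c ∈ checks1 (prev:ℤ) l k, c = 0) → (∀ c ∈ checks2 l, c = 0) →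
    k = prev * 4 ^ l.length := by
  intro l
  induction l with
  | nil =>
    intro prev k h1 _
    have := h1 (prev - k) (by simp [checks1])
    simp only [List.length_nil, pow_zero, mul_one]
    omega
  | cons z t ih =>
    intro prev k h1 h2
    have hb : ((prev:ℤ) - z.1) = 0 := h1 _ (by simp [checks1])
    have ha : (2 * (z.1:ℤ) - z.2) = 0 := h2 _ (by rw [checks2_cons]; exact List.mem_cons_self)
    have hβ : z.1 = prev := by omega
    have hα : z.2 = 2 * prev := by omega
    have htail1 : ∀ c ∈ checks1 ((4 * prev : ℕ) : ℤ) t k, c = 0 := by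
      intro c hc
      apply h1
      have : ((4 * prev : ℕ) : ℤ) = 2 * (z.2:ℤ) := by push_cast; omega
      rw [this] at hc
      simp [checks1, hc]
    have htail2 : ∀ c ∈ checks2 t, c = 0 := by
      intro c hc
      exact h2 c (by rw [checks2_cons]; exact List.mem_cons_of_mem _ hc)
    have := ih (4 * prev) k htail1 htail2
    rw [this]
    simp [List.length_cons]
    ring

def gl : ℕ → ℕ → List (ℕ × ℕ)
  | _, 0 => []
  | prev, (M+1) => (prev, 2 * prev) :: gl (4 * prev) M

lemma gl_len : ∀ (M prev : ℕ), (gl prev M).length = M := by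
  intro M
  induction M with
  | zero => intro prev; rfl
  | succ M ih => intro prev; simp [gl, ih]

lemma gl_checks1 : ∀ (M prev : ℕ), ∀ c ∈ checks1 (prev:ℤ) (gl prev M) (prev * 4 ^ M), c = 0 := by
  intro M
  induction M with
  | zero =>
    intro prev c hc
    simp [gl, checks1] at hc
    omega
  | succ M ih =>
    intro prev c hc
    simp only [gl, checks1] at hc
    rcases List.mem_cons.1 hc with rfl | hc
    · omega
    · have h4 : (2 * (2 * prev : ℕ) : ℤ) = ((4 * prev : ℕ) : ℤ) := by push_cast; ring
      rw [h4] at hc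
      have hk : prev * 4 ^ (M + 1) = (4 * prev) * 4 ^ M := by ring
      rw [hk] at hc
      exact ih (4 * prev) c hc
  
lemma gl_checks2 : ∀ (M prev : ℕ), ∀ c ∈ checks2 (gl prev M), c = 0 := by
  intro M
  induction M with
  | zero => intro prev c hc; simpa [gl, checks2] using hc
  | succ M ih =>
    intro prev c hc
    rw [show gl prev (M+1) = (prev, 2 * prev) :: gl (4 * prev) M from rfl, checks2_cons] at hc
    rcases List.mem_cons.1 hc with rfl | hc
    · push_cast; ring
    · exact ih (4 * prev) c hc

end Arith

section DfaSec

open A13 St13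

@[simp] lemma rep_zero (x : A13) : rep x 0 = [] := rfl
lemma rep_succ (x : A13) (n : ℕ) : rep x (n+1) = x :: rep x n := rfl
lemma rep_succ' (x : A13) (n : ℕ) : rep x (n+1) = rep x n ++ [x] := by
  simp [rep, List.replicate_succ']
lemma rep_one (x : A13) : rep x 1 = [x] := rfl

lemma base_append_singleton (l : List (ℕ × ℕ)) (z : ℕ × ℕ) :
    base (l ++ [z]) = base l ++ chunk z.1 z.2 := by
  simp [base]

def Shape : St13 → List A13 → Prop
  | S0, w => w = []
  | S1, w => w = [.p]
  | S2, w => w = [.p, .s]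
  | S3, w => ∃ l, w = base l
  | S4, w => ∃ l m, w = base l ++ rep .b (m+1)
  | S5, w => ∃ l m j, w = base l ++ rep .b m ++ [.p] ++ rep .a j
  | S6, w => ∃ l m, w = base l ++ rep .c (m+1)
  | S7, w => ∃ l k m, w = base l ++ rep .c k ++ rep .e (m+1)
  | S8, w => ∃ l k r m, w = base l ++ rep .c k ++ rep .e r ++ rep .f (m+1)
  | SD, _ => True

lemma shape_eval : ∀ w : List A13, Shape (dfa.evalFrom S0 w) w := by
  intro w
  induction w using List.reverseRecOn with
  | nil => exact rfl
  | append_singleton u y ih =>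
    rw [DFA.evalFrom_append_singleton]
    have hstep : dfa.step = delta := rfl
    rw [hstep]
    revert ih
    generalize dfa.evalFrom S0 u = st
    intro ih
    cases st <;> cases y <;>
      simp only [delta, Shape] <;>
      try trivial
    -- S0, p
    · rw [show u = [] from ih]; rfl
    -- S1, s
    · rw [show u = [A13.p] from ih]; rfl
    -- S2, q
    · exact ⟨[], by rw [ih]; rfl⟩
    -- S3
    · rcases ih with ⟨l, rfl⟩
      exact ⟨l, 0, rfl⟩
    · rcases ih with ⟨l, rfl⟩
      exact ⟨l, 0, by simp [rep]⟩
    · rcases ih with ⟨l, rfl⟩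
      exact ⟨l, 0, 0, by simp [rep]⟩
    · rcases ih with ⟨l, rfl⟩
      exact ⟨l, 0, 0, by simp [rep]⟩
    · rcases ih with ⟨l, rfl⟩
      exact ⟨l, 0, 0, 0, by simp [rep]⟩
    -- S4
    · rcases ih with ⟨l, m, rfl⟩
      exact ⟨l, m+1, by rw [rep_succ' .b (m+1), List.append_assoc]⟩
    · rcases ih with ⟨l, m, rfl⟩
      exact ⟨l, m+1, 0, by simp⟩
    -- S5
    · rcases ih with ⟨l, m, j, rfl⟩
      exact ⟨l, m, j+1, by rw [rep_succ' .a j]; simp [List.append_assoc]⟩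
    · rcases ih with ⟨l, m, j, rfl⟩
      exact ⟨l ++ [(m, j)], by rw [base_append_singleton]; simp [chunk, List.append_assoc]⟩
    -- S6
    · rcases ih with ⟨l, m, rfl⟩
      exact ⟨l, m+1, by rw [rep_succ' .c (m+1), List.append_assoc]⟩
    · rcases ih with ⟨l, m, rfl⟩
      exact ⟨l, m+1, 0, by simp [rep]⟩
    · rcases ih with ⟨l, m, rfl⟩
      exact ⟨l, m+1, 0, 0, by simp [rep]⟩
    -- S7
    · rcases ih with ⟨l, k, m, rfl⟩
      exact ⟨l, k, m+1, by rw [rep_succ' .e (m+1)]; simp [List.append_assoc]⟩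
    · rcases ih with ⟨l, k, m, rfl⟩
      exact ⟨l, k, m+1, 0, by simp [rep]⟩
    -- S8
    · rcases ih with ⟨l, k, r, m, rfl⟩
      exact ⟨l, k, r, m+1, by rw [rep_succ' .f (m+1)]; simp [List.append_assoc]⟩

lemma accepts_shape {w : List A13} (hw : w ∈ dfa.accepts) :
    ∃ l k r r', w = mkWord l k r r' := by
  have hs := shape_eval w
  have hmem : dfa.evalFrom S0 w ∈ ({S3, S6, S7, S8} : Set St13) := hw
  rcases hmem with h | h | h | h <;> rw [h] at hs
  · rcases hs with ⟨l, rfl⟩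
    exact ⟨l, 0, 0, 0, by simp [mkWord]⟩
  · rcases hs with ⟨l, m, rfl⟩
    exact ⟨l, m+1, 0, 0, by simp [mkWord]⟩
  · rcases hs with ⟨l, k, m, rfl⟩
    exact ⟨l, k, m+1, 0, by simp [mkWord]⟩
  · rcases hs with ⟨l, k, r, m, rfl⟩
    exact ⟨l, k, r, m+1, by simp [mkWord]⟩

lemma ev_append (st : St13) (u v : List A13) :
    dfa.evalFrom st (u ++ v) = dfa.evalFrom (dfa.evalFrom st u) v := by
  simp [DFA.evalFrom, List.foldl_append]

lemma ev4b (n : ℕ) : dfa.evalFrom S4 (rep .b n) = S4 := by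
  induction n with
  | zero => rfl
  | succ n ih => rw [rep_succ]; exact ih

lemma ev5a (n : ℕ) : dfa.evalFrom S5 (rep .a n) = S5 := by
  induction n with
  | zero => rfl
  | succ n ih => rw [rep_succ]; exact ih

lemma ev6c (n : ℕ) : dfa.evalFrom S6 (rep .c n) = S6 := by
  induction n with
  | zero => rfl
  | succ n ih => rw [rep_succ]; exact ih

lemma ev7e (n : ℕ) : dfa.evalFrom S7 (rep .e n) = S7 := by
  induction n with
  | zero => rfl
  | succ n ih => rw [rep_succ]; exact ih

lemma ev8f (n : ℕ) : dfa.evalFrom S8 (rep .f n) = S8 := by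
  induction n with
  | zero => rfl
  | succ n ih => rw [rep_succ]; exact ih

lemma ev3chunk (β α : ℕ) : dfa.evalFrom S3 (chunk β α) = S3 := by
  unfold chunk
  rw [ev_append, ev_append, ev_append]
  have h1 : dfa.evalFrom S3 (rep .b β) = S3 ∨ dfa.evalFrom S3 (rep .b β) = S4 := by
    cases β with
    | zero => exact Or.inl rfl
    | succ n => right; rw [rep_succ]; exact ev4b n
  have h2 : dfa.evalFrom (dfa.evalFrom S3 (rep .b β)) [A13.p] = S5 := by
    rcases h1 with h | h <;> rw [h] <;> rfl
  rw [h2, ev5a]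
  rfl

lemma ev3flatten (l : List (ℕ × ℕ)) :
    dfa.evalFrom S3 ((l.map fun z => chunk z.1 z.2).flatten) = S3 := by
  induction l with
  | nil => rfl
  | cons z t ih =>
    rw [List.map_cons, List.flatten_cons, ev_append, ev3chunk, ih]

lemma mkWord_accepted (l : List (ℕ × ℕ)) (k r r' : ℕ) :
    mkWord l (k+1) (r+1) (r'+1) ∈ dfa.accepts := by
  rw [DFA.mem_accepts]
  show dfa.evalFrom S0 _ ∈ ({S3, S6, S7, S8} : Set St13)
  unfold mkWord base
  rw [ev_append, ev_append, ev_append, ev_append]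
  have h0 : dfa.evalFrom S0 [A13.p, A13.s, A13.q] = S3 := rfl
  rw [h0, ev3flatten]
  rw [rep_succ .c, show dfa.evalFrom S3 (A13.c :: rep .c k) = dfa.evalFrom S6 (rep .c k) from rfl,
    ev6c]
  rw [rep_succ .e, show dfa.evalFrom S6 (A13.e :: rep .e r) = dfa.evalFrom S7 (rep .e r) from rfl,
    ev7e]
  rw [rep_succ .f, show dfa.evalFrom S7 (A13.f :: rep .f r') = dfa.evalFrom S8 (rep .f r') from rfl,
    ev8f]
  simp

end DfaSec

section Assemble

open A13

abbrev F2 := FreeGroup (Fin 2)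

def x0 : F2 := FreeGroup.of 0
def A0 : F2 := FreeGroup.of 1

def φ13 : FreeMonoid A13 →* F2 × F2 :=
  FreeMonoid.lift (fun y => (g1 A0 x0 y, g2 A0 x0 y))

def hm : A13 → FreeMonoid Unit
  | .c => FreeMonoid.of ()
  | _ => 1

def h13 : FreeMonoid A13 →* FreeMonoid Unit := FreeMonoid.lift hm

noncomputable def ρ13 : F2 →* Wg := FreeGroup.lift (fun i => if i = 0 then XX else AA)

def R13 : Language A13 := dfa.accepts

def L13 : Language Unit :=
  (fun w => FreeMonoid.toList (h13 w)) ''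
    {w : FreeMonoid A13 | FreeMonoid.toList w ∈ R13 ∧ φ13 w = 1}

lemma phi_fst (w : FreeMonoid A13) :
    (φ13 w).1 = wp (g1 A0 x0) (FreeMonoid.toList w) := by
  have h : (MonoidHom.fst F2 F2).comp φ13 = FreeMonoid.lift (g1 A0 x0) :=
    FreeMonoid.hom_eq (fun y => rfl)
  calc (φ13 w).1 = ((MonoidHom.fst F2 F2).comp φ13) w := rfl
    _ = FreeMonoid.lift (g1 A0 x0) w := by rw [h]
    _ = wp (g1 A0 x0) (FreeMonoid.toList w) := FreeMonoid.lift_apply _ _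

lemma phi_snd (w : FreeMonoid A13) :
    (φ13 w).2 = wp (g2 A0 x0) (FreeMonoid.toList w) := by
  have h : (MonoidHom.snd F2 F2).comp φ13 = FreeMonoid.lift (g2 A0 x0) :=
    FreeMonoid.hom_eq (fun y => rfl)
  calc (φ13 w).2 = ((MonoidHom.snd F2 F2).comp φ13) w := rfl
    _ = FreeMonoid.lift (g2 A0 x0) w := by rw [h]
    _ = wp (g2 A0 x0) (FreeMonoid.toList w) := FreeMonoid.lift_apply _ _

lemma rho_x0 : ρ13 x0 = XX := by
  rw [ρ13, x0, FreeGroup.lift_apply_of, if_pos rfl]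

lemma rho_A0 : ρ13 A0 = AA := by
  rw [ρ13, A0, FreeGroup.lift_apply_of, if_neg (by decide)]

lemma rho_g1 (y : A13) : ρ13 (g1 A0 x0 y) = g1 AA XX y := by
  cases y <;> simp [g1, map_pow, map_inv, map_one, rho_x0, rho_A0]

lemma rho_g2 (y : A13) : ρ13 (g2 A0 x0 y) = g2 AA XX y := by
  cases y <;> simp [g2, map_pow, map_inv, map_one, rho_x0, rho_A0]

lemma rho_wp1 (w : List A13) : ρ13 (wp (g1 A0 x0) w) = wp (g1 AA XX) w := by
  unfold wp
  rw [map_list_prod, List.map_map]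
  congr 1
  apply List.map_congr_left
  intro y _
  exact rho_g1 y

lemma rho_wp2 (w : List A13) : ρ13 (wp (g2 A0 x0) w) = wp (g2 AA XX) w := by
  unfold wp
  rw [map_list_prod, List.map_map]
  congr 1
  apply List.map_congr_left
  intro y _
  exact rho_g2 y

/-- length of the h-image -/
def lenh (w : List A13) : ℕ := (FreeMonoid.toList (h13 (FreeMonoid.ofList w))).length

lemma lenh_append (u v : List A13) : lenh (u ++ v) = lenh u + lenh v := by
  unfold lenh
  rw [show FreeMonoid.ofList (u ++ v) = FreeMonoid.ofList u * FreeMonoid.ofList v from rfl,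
    map_mul, FreeMonoid.toList_mul, List.length_append]

lemma lenh_cons (y : A13) (u : List A13) :
    lenh (y :: u) = (FreeMonoid.toList (hm y)).length + lenh u := by
  unfold lenh
  rw [show FreeMonoid.ofList (y :: u) = FreeMonoid.of y * FreeMonoid.ofList u from rfl,
    map_mul, FreeMonoid.toList_mul, List.length_append]
  congr 1

lemma lenh_nil : lenh [] = 0 := rfl

lemma lenh_rep_c (n : ℕ) : lenh (rep .c n) = n := by
  induction n with
  | zero => rfl
  | succ n ih => rw [rep_succ, lenh_cons, ih]; simp [hm]; omega

lemma lenh_rep_nc (x : A13) (hx : x ≠ .c) (n : ℕ) : lenh (rep x n) = 0 := by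
  induction n with
  | zero => rfl
  | succ n ih =>
    rw [rep_succ, lenh_cons, ih]
    cases x <;> first | rfl | exact absurd rfl hx

lemma lenh_chunk (β α : ℕ) : lenh (chunk β α) = 0 := by
  unfold chunk
  rw [lenh_append, lenh_append, lenh_append, lenh_rep_nc _ (by simp) β,
    lenh_rep_nc _ (by simp) α]
  rfl

lemma lenh_base (l : List (ℕ × ℕ)) : lenh (base l) = 0 := by
  unfold base
  rw [lenh_append]
  have h : ∀ l' : List (ℕ × ℕ), lenh ((l'.map fun z => chunk z.1 z.2).flatten) = 0 := by
    intro l'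
    induction l' with
    | nil => rfl
    | cons z t ih =>
      rw [List.map_cons, List.flatten_cons, lenh_append, ih, lenh_chunk]
  rw [h]
  rfl

lemma lenh_mkWord (l : List (ℕ × ℕ)) (k r r' : ℕ) : lenh (mkWord l k r r') = k := by
  unfold mkWord
  rw [lenh_append, lenh_append, lenh_append, lenh_base, lenh_rep_c,
    lenh_rep_nc _ (by simp) r, lenh_rep_nc _ (by simp) r']
  omega

lemma unit_list_eq (l : List Unit) : l = List.replicate l.length () :=
  List.eq_replicate_of_mem (fun _ _ => rfl)

/-- Soundness: accepted words give h-images of length 2·4^M. -/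
lemma sound {w : FreeMonoid A13} (hR : FreeMonoid.toList w ∈ R13) (hφ : φ13 w = 1) :
    ∃ M : ℕ, FreeMonoid.toList (h13 w) = List.replicate (2 * 4 ^ M) () := by
  obtain ⟨l, k, r, r', hw⟩ := accepts_shape hR
  have h1 : wp (g1 AA XX) (FreeMonoid.toList w) = 1 := by
    have := congrArg Prod.fst hφ
    rw [phi_fst] at this
    have h2 := congrArg ρ13 this
    rw [rho_wp1, show ((1 : F2 × F2).1) = (1 : F2) from rfl, map_one] at h2
    exact h2
  have h2 : wp (g2 AA XX) (FreeMonoid.toList w) = 1 := by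
    have := congrArg Prod.snd hφ
    rw [phi_snd] at this
    have h2 := congrArg ρ13 this
    rw [rho_wp2, show ((1 : F2 × F2).2) = (1 : F2) from rfl, map_one] at h2
    exact h2
  rw [hw, eval_g1] at h1
  rw [hw, eval_g2] at h2
  have hc1 := gadget_Wg_eq_one h1
  have hc2 := gadget_Wg_eq_one h2
  have harith : k = 2 * 4 ^ l.length := by
    have := arith l 2 k (by
      have := hc1.1
      norm_num at this ⊢
      exact this) hc2.1
    simpa using this
  refine ⟨l.length, ?_⟩
  have hlen : (FreeMonoid.toList (h13 w)).length = k := by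
    have : w = FreeMonoid.ofList (mkWord l k r r') := by
      rw [← hw]; rfl
    rw [this]
    exact lenh_mkWord l k r r'
  rw [unit_list_eq (FreeMonoid.toList (h13 w)), hlen, harith]

/-- Completeness: every 2·4^M arises. -/
lemma complete (M : ℕ) :
    ∃ w : FreeMonoid A13, (FreeMonoid.toList w ∈ R13 ∧ φ13 w = 1) ∧
      FreeMonoid.toList (h13 w) = List.replicate (2 * 4 ^ M) () := by
  refine ⟨FreeMonoid.ofList (mkWord (gl 2 M) (2 * 4 ^ M) (M+1) (M+1)), ⟨?_, ?_⟩, ?_⟩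
  · have h4 : 0 < 4 ^ M := pow_pos (by norm_num) M
    have hk : 2 * 4 ^ M = (2 * 4 ^ M - 1) + 1 := by omega
    show mkWord (gl 2 M) (2 * 4 ^ M) (M+1) (M+1) ∈ dfa.accepts
    rw [hk]
    exact mkWord_accepted _ _ _ _
  · have hfst : (φ13 (FreeMonoid.ofList (mkWord (gl 2 M) (2 * 4 ^ M) (M+1) (M+1)))).1 = 1 := by
      rw [phi_fst]
      show wp (g1 A0 x0) (mkWord (gl 2 M) (2 * 4 ^ M) (M+1) (M+1)) = 1
      rw [eval_g1]
      have hlen : (checks1 2 (gl 2 M) (2 * 4 ^ M)).length = M + 1 := by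
        rw [checks1_len, gl_len]
      rw [show M + 1 = (checks1 2 (gl 2 M) (2 * 4 ^ M)).length from hlen.symm]
      apply gadget_eq_one
      intro c hc
      have := gl_checks1 M 2
      norm_num at this
      exact this c hc
    have hsnd : (φ13 (FreeMonoid.ofList (mkWord (gl 2 M) (2 * 4 ^ M) (M+1) (M+1)))).2 = 1 := by
      rw [phi_snd]
      show wp (g2 A0 x0) (mkWord (gl 2 M) (2 * 4 ^ M) (M+1) (M+1)) = 1
      rw [eval_g2]
      have hlen : (checks2 (gl 2 M)).length = M + 1 := by
        rw [checks2_len, gl_len]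
      rw [show M + 1 = (checks2 (gl 2 M)).length from hlen.symm]
      exact gadget_eq_one _ _ (gl_checks2 M 2)
    exact Prod.ext hfst hsnd
  · have : lenh (mkWord (gl 2 M) (2 * 4 ^ M) (M+1) (M+1)) = 2 * 4 ^ M :=
      lenh_mkWord _ _ _ _
    rw [unit_list_eq (FreeMonoid.toList (h13 _))]
    unfold lenh at this
    rw [this]

end Assemble

section Final

lemma parikh_replicate (n : ℕ) : parikh (List.replicate n ()) = fun _ => n := by
  funext u
  cases u
  unfold parikh
  simp

lemma L13_parikh :
    parikh '' L13 = Set.range (fun M : ℕ => (fun _ : Unit => 2 * 4 ^ M : Unit → ℕ)) := by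
  ext g
  constructor
  · rintro ⟨v, ⟨w, hw, rfl⟩, rfl⟩
    obtain ⟨M, hM⟩ := sound hw.1 hw.2
    refine ⟨M, ?_⟩
    show (fun _ : Unit => 2 * 4 ^ M) = parikh (FreeMonoid.toList (h13 w))
    rw [hM, parikh_replicate]
  · rintro ⟨M, rfl⟩
    obtain ⟨w, hw, hl⟩ := complete M
    exact ⟨FreeMonoid.toList (h13 w), ⟨w, hw, rfl⟩, by rw [hl, parikh_replicate]⟩

lemma two_four_inj :
    Function.Injective (fun M : ℕ => (fun _ : Unit => 2 * 4 ^ M : Unit → ℕ)) := by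
  intro a b h
  have h1 := congrFun h ()
  simp only [] at h1
  have h2 : (4:ℕ) ^ a = 4 ^ b := by omega
  exact Nat.pow_right_injective (by norm_num) h2

lemma no3AP (u a m0 m1 m2 : ℕ) (ha : 0 < a) (h0 : u = 2 * 4 ^ m0)
    (h1 : u + a = 2 * 4 ^ m1) (h2 : u + 2 * a = 2 * 4 ^ m2) : False := by
  have l12 : m1 < m2 := by
    by_contra h
    push_neg at h
    have := Nat.pow_le_pow_right (by norm_num : 1 ≤ 4) h
    omega
  have hle : 4 ^ (m1 + 1) ≤ 4 ^ m2 := Nat.pow_le_pow_right (by norm_num) l12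
  have hsucc : 4 ^ (m1 + 1) = 4 * 4 ^ m1 := by rw [pow_succ]; ring
  omega

theorem not_semilinear : ¬ IsSemilinearSet (parikh '' L13) := by
  rw [L13_parikh]
  rintro ⟨n, T, hT, hU⟩
  have hinf : (Set.range (fun M : ℕ => (fun _ : Unit => 2 * 4 ^ M : Unit → ℕ))).Infinite :=
    Set.infinite_range_of_injective two_four_inj
  have hex : ∃ i, (T i).Infinite := by
    by_contra h
    push_neg at h
    exact hinf (hU ▸ Set.finite_iUnion h)
  obtain ⟨i, hi⟩ := hex
  obtain ⟨α₀, nn, α, hTi⟩ := hT i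
  by_cases hz : ∀ j, α j = 0
  · apply hi
    have hsub : T i ⊆ {α₀} := by
      intro β hβ
      rw [hTi] at hβ
      obtain ⟨m, rfl⟩ := hβ
      simp [hz]
    exact Set.Finite.subset (Set.finite_singleton _) hsub
  push_neg at hz
  obtain ⟨j, hj⟩ := hz
  have ha : 0 < α j () := by
    rcases Nat.eq_zero_or_pos (α j ()) with h | h
    · exact absurd (funext fun u => by cases u; exact h) hj
    · exact h
  have hmem : ∀ c : ℕ, α₀ + c • α j ∈ T i := by
    intro c
    rw [hTi]
    refine ⟨Pi.single j c, ?_⟩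
    congr 1
    rw [Finset.sum_eq_single j]
    · simp
    · intro b _ hb
      simp [Pi.single_eq_of_ne hb]
    · intro hj'
      exact absurd (Finset.mem_univ j) hj'
  have hS : ∀ c : ℕ, ∃ m, α₀ () + c * α j () = 2 * 4 ^ m := by
    intro c
    have h1 : α₀ + c • α j ∈ ⋃ i, T i := Set.mem_iUnion.2 ⟨i, hmem c⟩
    rw [← hU] at h1
    obtain ⟨m, hmeq⟩ := h1
    refine ⟨m, ?_⟩
    have := congrFun hmeq ()
    simp only [Pi.add_apply, Pi.smul_apply, smul_eq_mul] at this
    omega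
  obtain ⟨m0, hm0⟩ := hS 0
  obtain ⟨m1, hm1⟩ := hS 1
  obtain ⟨m2, hm2⟩ := hS 2
  exact no3AP (α₀ ()) (α j ()) m0 m1 m2 ha (by omega) (by omega) (by omega)

end Final

/-- `VA (F₂ × F₂)` contains a language with non-semilinear Parikh
image, where `F₂` is the free group on two generators. -/
theorem stmt13 :
    ∃ (X : Type) (_ : Fintype X) (L : Language X),
      VA (FreeGroup (Fin 2) × FreeGroup (Fin 2)) L ∧ ¬ IsSemilinearSet (parikh '' L) := by
  refine ⟨Unit, inferInstance, L13, ?_, not_semilinear⟩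
  exact ⟨A13, inferInstance, R13, φ13, h13, ⟨St13, inferInstance, dfa, rfl⟩, rfl⟩

end Paper
end

section
/- Let X be a finite alphabet and k ≥ 1 a natural number. Every subset S of the multisets over X (functions X → ℕ) that is upward closed with respect to ≤_k (i.e. α ∈ S, α ≤ β pointwise, and α ≡ β (mod k) pointwise imply β ∈ S) is semilinear. -/
namespace Paper

/-- Finite basis property (Dickson's lemma): every subset of `ℕ^X` has a finite
subset below every element. -/
lemma finite_basis {X : Type} [Fintype X] (U : Set (X → ℕ)) :
    ∃ F : Finset (X → ℕ), ↑F ⊆ U ∧ ∀ γ ∈ U, ∃ μ ∈ F, ∀ x, μ x ≤ γ x := by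
  classical
  set M : Set (X → ℕ) := {α | α ∈ U ∧ ∀ β ∈ U, β ≤ α → β = α} with hM
  have hmin : ∀ n (γ : X → ℕ), γ ∈ U → (∑ x, γ x) ≤ n → ∃ μ ∈ M, μ ≤ γ := by
    intro n
    induction n using Nat.strong_induction_on with
    | _ n ih =>
      intro γ hγ hsum
      by_cases hγmin : ∀ β ∈ U, β ≤ γ → β = γ
      · exact ⟨γ, ⟨hγ, hγmin⟩, le_refl _⟩
      · push_neg at hγmin
        obtain ⟨β, hβU, hβle, hβne⟩ := hγmin
        have hx : ∃ x, β x < γ x := by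
          by_contra h
          push_neg at h
          exact hβne (le_antisymm hβle fun x => h x)
        obtain ⟨x₀, hx₀⟩ := hx
        have hlt : (∑ x, β x) < ∑ x, γ x :=
          Finset.sum_lt_sum (fun i _ => hβle i) ⟨x₀, Finset.mem_univ _, hx₀⟩
        obtain ⟨μ, hμM, hμβ⟩ := ih (∑ x, β x) (lt_of_lt_of_le hlt hsum) β hβU (le_refl _)
        exact ⟨μ, hμM, le_trans hμβ hβle⟩
  have hanti : IsAntichain (· ≤ ·) M := by
    intro μ hμ ν hν hne hle
    exact hne (hν.2 μ hμ.1 hle)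
  have hfin : M.Finite :=
    hanti.finite_of_partiallyWellOrderedOn
      (Set.isPWO_of_wellQuasiOrderedLE M)
  refine ⟨hfin.toFinset, ?_, ?_⟩
  · intro μ hμ
    exact (hfin.mem_toFinset.1 hμ).1
  · intro γ hγ
    obtain ⟨μ, hμM, hμγ⟩ := hmin (∑ x, γ x) γ hγ (le_refl _)
    exact ⟨μ, hfin.mem_toFinset.2 hμM, fun x => hμγ x⟩

/-- The "cone" `{α₀ + k·δ : δ}` is linear. -/
lemma upSet_linear {X : Type} [Fintype X] (k : ℕ) (α₀ : X → ℕ) :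
    IsLinearSet {β : X → ℕ | ∃ δ : X → ℕ, β = α₀ + fun x => k * δ x} := by
  classical
  obtain ⟨e⟩ : Nonempty (Fin (Fintype.card X) ≃ X) := ⟨(Fintype.equivFin X).symm⟩
  refine ⟨α₀, Fintype.card X, fun i x => if x = e i then k else 0, ?_⟩
  have key : ∀ (m : Fin (Fintype.card X) → ℕ) (x : X),
      (∑ i, m i • (fun y => if y = e i then k else 0 : X → ℕ)) x = k * m (e.symm x) := by
    intro m x
    rw [Finset.sum_apply]
    rw [Finset.sum_eq_single (e.symm x)]
    · simp [mul_comm]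
    · intro i _ hi
      simp only [Pi.smul_apply, smul_eq_mul]
      rw [if_neg, mul_zero]
      intro h
      exact hi (by simp [h])
    · intro h
      exact absurd (Finset.mem_univ _) h
  ext β
  simp only [Set.mem_setOf_eq]
  constructor
  · rintro ⟨δ, rfl⟩
    refine ⟨fun i => δ (e i), ?_⟩
    funext x
    simp only [Pi.add_apply]
    rw [key]
    simp
  · rintro ⟨m, rfl⟩
    refine ⟨fun x => m (e.symm x), ?_⟩
    funext x
    simp only [Pi.add_apply]
    rw [key]

/-- A union of linear sets indexed by a finite type is semilinear. -/
lemma semilinear_iUnion {X ι : Type} [Fintype ι] (T : ι → Set (X → ℕ))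
    (h : ∀ i, IsLinearSet (T i)) : IsSemilinearSet (⋃ i, T i) := by
  obtain ⟨e⟩ : Nonempty (ι ≃ Fin (Fintype.card ι)) := ⟨Fintype.equivFin ι⟩
  refine ⟨Fintype.card ι, fun j => T (e.symm j), fun j => h _, ?_⟩
  ext β
  simp only [Set.mem_iUnion]
  exact ⟨fun ⟨i, hi⟩ => ⟨e i, by simpa using hi⟩, fun ⟨j, hj⟩ => ⟨e.symm j, hj⟩⟩

/-- For a finite alphabet `X` and `k ≥ 1`, every subset of the multisets
over `X` that is upward closed with respect to `≤ₖ` is semilinear. -/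
theorem stmt16 (X : Type) [Fintype X] (k : ℕ) (hk : 1 ≤ k) (S : Set (X → ℕ))
    (hS : ∀ α ∈ S, ∀ β : X → ℕ,
      (∀ x, α x ≤ β x) → (∀ x, α x ≡ β x [MOD k]) → β ∈ S) :
    IsSemilinearSet S := by
  classical
  have hk0 : 0 < k := hk
  set U : (X → Fin k) → Set (X → ℕ) :=
    fun ρ => {γ | (fun x => k * γ x + (ρ x : ℕ)) ∈ S} with hUdef
  choose F hFsub hFdom using fun ρ => finite_basis (U ρ)
  set T : (Σ ρ : X → Fin k, {μ : X → ℕ // μ ∈ F ρ}) → Set (X → ℕ) :=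
    fun p => {β | ∃ δ : X → ℕ,
      β = (fun x => k * p.2.1 x + (p.1 x : ℕ)) + fun x => k * δ x} with hTdef
  have hT : ∀ p, IsLinearSet (T p) := fun p => upSet_linear k _
  have hSeq : S = ⋃ p, T p := by
    ext β
    constructor
    · intro hβ
      set ρ : X → Fin k := fun x => ⟨β x % k, Nat.mod_lt _ hk0⟩ with hρ
      set γ : X → ℕ := fun x => β x / k with hγ
      have hβeq : ∀ x, β x = k * γ x + (ρ x : ℕ) := by
        intro x
        simp only [hρ, hγ]
        exact (Nat.div_add_mod (β x) k).symm
      have hγU : γ ∈ U ρ := by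
        simp only [hUdef, Set.mem_setOf_eq]
        have : (fun x => k * γ x + (ρ x : ℕ)) = β := by
          funext x; exact (hβeq x).symm
        rw [this]; exact hβ
      obtain ⟨μ, hμF, hμγ⟩ := hFdom ρ γ hγU
      refine Set.mem_iUnion.2 ⟨⟨ρ, ⟨μ, hμF⟩⟩, ⟨fun x => γ x - μ x, ?_⟩⟩
      funext x
      simp only [Pi.add_apply]
      have h4 : k * μ x + (ρ x : ℕ) + k * (γ x - μ x) = k * γ x + (ρ x : ℕ) := by
        rw [add_right_comm, ← Nat.mul_add, Nat.add_sub_cancel' (hμγ x)]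
      rw [h4]
      exact hβeq x
    · intro hβ
      obtain ⟨⟨ρ, μ, hμF⟩, hp⟩ := Set.mem_iUnion.1 hβ
      simp only [hTdef, Set.mem_setOf_eq] at hp
      obtain ⟨δ, hβeq⟩ := hp
      have hμS : (fun x => k * μ x + (ρ x : ℕ)) ∈ S := hFsub ρ hμF
      refine hS _ hμS β ?_ ?_
      · intro x
        rw [congrFun hβeq x]
        exact Nat.le_add_right _ _
      · intro x
        rw [congrFun hβeq x]
        simp only [Pi.add_apply]
        exact (Nat.add_mul_mod_self_left _ _ _).symm
  rw [hSeq]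
  exact semilinear_iUnion T hT

end Paper
end
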